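/- Let μ be a probability measure on ℝ^d, z ∈ ℝ^d, r > 0 and s > 0, and let X_1, X_2, … be i.i.d. random vectors with law μ. Then almost surely, SD^r_s(z | X_{1:n}) → SD^r_s(z | μ) as n → ∞, where SD^r_s(z | X_{1:n}) denotes the sphere depth of the empirical measure of the first n samples. -/

import Mathlib

open MeasureTheory

/-- The sigmoid function with scale `s`. -/
noncomputable def sig (s t : ℝ) : ℝ := 1 / (1 + Real.exp (-t / s))

/-- The (smoothed, `s > 0`) sphere depth
`SD^r_s(z|μ) = inf_{‖c−z‖=r} ∫ sig_s(r² − ‖x − c‖²) dμ(x)`. -/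
noncomputable def SDs (d : ℕ) (r s : ℝ) (z : EuclideanSpace ℝ (Fin d))
    (μ : Measure (EuclideanSpace ℝ (Fin d))) : ℝ :=
  ⨅ c : Metric.sphere z r, ∫ x, sig s (r ^ 2 - ‖x - (c : EuclideanSpace ℝ (Fin d))‖ ^ 2) ∂μ

/-- The sphere depth of the empirical measure of the samples `x₁,…,xₙ`:
`SD^r_s(z|x_{1:n}) = inf_{‖c−z‖=r} (1/n) Σᵢ sig_s(r² − ‖xᵢ − c‖²)`. -/
noncomputable def SDemp (d : ℕ) (r s : ℝ) (z : EuclideanSpace ℝ (Fin d)) (n : ℕ)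
    (x : Fin n → EuclideanSpace ℝ (Fin d)) : ℝ :=
  ⨅ c : Metric.sphere z r,
    (n : ℝ)⁻¹ * ∑ i, sig s (r ^ 2 - ‖x i - (c : EuclideanSpace ℝ (Fin d))‖ ^ 2)

open Filter
open scoped NNReal


lemma sig_nonneg {s t : ℝ} : 0 ≤ sig s t := by
  unfold sig; positivity

lemma sig_le_one {s t : ℝ} : sig s t ≤ 1 := by
  unfold sig
  rw [div_le_one (by positivity)]
  linarith [Real.exp_pos (-t/s)]

lemma sig_eq (s : ℝ) (hs : s ≠ 0) (r t : ℝ) :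
    sig s (r^2 - t^2) = (1 + Real.exp ((t^2 - r^2)/s))⁻¹ := by
  unfold sig
  rw [one_div]
  congr 2
  field_simp
  congr 1; ring

lemma abs_mul_exp_le {s : ℝ} (hs : 0 < s) (t : ℝ) :
    |t| ≤ Real.sqrt s * Real.exp (t^2/s) := by
  have h4 : 0 < Real.sqrt s := Real.sqrt_pos.mpr hs
  have hss : Real.sqrt s * Real.sqrt s = s := Real.mul_self_sqrt hs.le
  rcases le_or_gt |t| (Real.sqrt s) with h | h
  · calc |t| ≤ Real.sqrt s * 1 := by linarith
    _ ≤ _ := by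
        have := Real.one_le_exp (x := t^2/s) (by positivity)
        nlinarith
  · have h1 : t^2/s ≤ Real.exp (t^2/s) := by
      linarith [Real.add_one_le_exp (t^2/s)]
    have key : |t| ≤ t^2 / Real.sqrt s := by
      rw [le_div_iff₀ h4]
      nlinarith [mul_le_mul_of_nonneg_left h.le (abs_nonneg t), sq_abs t]
    have h7 : Real.sqrt s * (t^2/s) = t^2 / Real.sqrt s := by
      field_simp
      nlinarith
    nlinarith [mul_le_mul_of_nonneg_left h1 h4.le]

lemma sigLip {r s : ℝ} (hs : 0 < s) :
    LipschitzWith (Real.toNNReal (2 * Real.exp (r^2/s) / Real.sqrt s))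
      (fun t : ℝ => sig s (r^2 - t^2)) := by
  have heq : (fun t : ℝ => sig s (r^2 - t^2))
      = fun t : ℝ => (1 + Real.exp ((t^2 - r^2)/s))⁻¹ := by
    funext t; exact sig_eq s hs.ne' r t
  rw [heq]
  have h4' : 0 < Real.sqrt s := Real.sqrt_pos.mpr hs
  have hss : Real.sqrt s * Real.sqrt s = s := Real.mul_self_sqrt hs.le
  set h' : ℝ → ℝ := fun t => -(Real.exp ((t^2 - r^2)/s) * (2*t/s)) / (1 + Real.exp ((t^2-r^2)/s))^2 with hh'
  have hd : ∀ t : ℝ, HasDerivAt (fun t : ℝ => (1 + Real.exp ((t^2 - r^2)/s))⁻¹) (h' t) t := by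
    intro t
    have h1 : HasDerivAt (fun t : ℝ => (t^2 - r^2)/s) (2*t/s) t := by
      have := ((hasDerivAt_pow 2 t).sub_const (r^2)).div_const s
      simpa using this
    have h4 := (h1.exp.const_add 1).inv (by positivity)
    exact h4
  apply lipschitzWith_of_nnnorm_deriv_le (fun t => (hd t).differentiableAt)
  intro t
  rw [(hd t).deriv, ← NNReal.coe_le_coe, coe_nnnorm,
    Real.coe_toNNReal _ (by positivity), Real.norm_eq_abs]
  set a := Real.exp ((t^2 - r^2)/s) with ha
  have ha0 : 0 < a := Real.exp_pos _
  have hstep : |h' t| = a * (2*|t|/s) / (1+a)^2 := by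
    rw [hh']
    rw [abs_div, abs_neg, abs_mul, abs_of_pos ha0, abs_of_pos (by positivity : (0:ℝ) < (1+a)^2)]
    congr 1
    rw [abs_div, abs_of_pos hs, abs_mul]
    norm_num
  rw [hstep]
  have hinv : a / (1+a)^2 ≤ a⁻¹ := by
    rw [div_le_iff₀ (by positivity), inv_mul_eq_div, le_div_iff₀ ha0]
    nlinarith
  have hainv : a⁻¹ = Real.exp (r^2/s) * (Real.exp (t^2/s))⁻¹ := by
    rw [ha, ← Real.exp_neg, ← Real.exp_neg, ← Real.exp_add]
    congr 1; field_simp; ring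
  have hkey : |t| * a⁻¹ ≤ Real.exp (r^2/s) * Real.sqrt s := by
    rw [hainv]
    have h3 : (0:ℝ) < Real.exp (t^2/s) := Real.exp_pos _
    have h5 : |t| * (Real.exp (t^2/s))⁻¹ ≤ Real.sqrt s := by
      rw [mul_inv_le_iff₀ h3, mul_comm]
      exact (abs_mul_exp_le hs t).trans_eq (mul_comm _ _)
    calc |t| * (Real.exp (r^2/s) * (Real.exp (t^2/s))⁻¹)
        = (|t| * (Real.exp (t^2/s))⁻¹) * Real.exp (r^2/s) := by ring
      _ ≤ Real.sqrt s * Real.exp (r^2/s) :=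
          mul_le_mul_of_nonneg_right h5 (Real.exp_pos _).le
      _ = _ := by ring
  have e1 : a * (2*|t|/s) / (1+a)^2 = (2/s)*|t| * (a/(1+a)^2) := by ring
  have e2 : (2/s)*|t| * (a/(1+a)^2) ≤ (2/s)*|t| * a⁻¹ :=
    mul_le_mul_of_nonneg_left hinv (by positivity)
  have e4 : (2/s) * (|t| * a⁻¹) ≤ (2/s) * (Real.exp (r^2/s)*Real.sqrt s) :=
    mul_le_mul_of_nonneg_left hkey (by positivity)
  have e5 : (2/s) * (Real.exp (r^2/s)*Real.sqrt s) = 2*Real.exp (r^2/s)/Real.sqrt s := by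
    rw [eq_div_iff h4'.ne']
    field_simp
    nlinarith [Real.exp_pos (r^2/s)]
  calc a * (2*|t|/s) / (1+a)^2 = (2/s)*|t| * (a/(1+a)^2) := e1
    _ ≤ (2/s)*|t| * a⁻¹ := e2
    _ = (2/s) * (|t| * a⁻¹) := by ring
    _ ≤ (2/s) * (Real.exp (r^2/s)*Real.sqrt s) := e4
    _ = _ := e5

-- family Lipschitz on the sphere
lemma famLip {d : ℕ} {r s : ℝ} (hs : 0 < s) (z : EuclideanSpace ℝ (Fin d))
    (x : EuclideanSpace ℝ (Fin d)) :
    LipschitzWith (Real.toNNReal (2 * Real.exp (r^2/s) / Real.sqrt s))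
      (fun c : Metric.sphere z r => sig s (r^2 - ‖x - (c : EuclideanSpace ℝ (Fin d))‖^2)) := by
  have h1 : LipschitzWith 1 (fun c : Metric.sphere z r => dist x (c : EuclideanSpace ℝ (Fin d))) := by
    convert (LipschitzWith.dist_right x).comp (isometry_subtype_coe.lipschitz) using 1 <;> simp [Function.comp_def]
  have h2 := (sigLip (r := r) hs).comp h1
  have he : (fun c : Metric.sphere z r => sig s (r^2 - ‖x - (c : EuclideanSpace ℝ (Fin d))‖^2))
      = (fun t : ℝ => sig s (r^2 - t^2)) ∘ (fun c : Metric.sphere z r => dist x (c : EuclideanSpace ℝ (Fin d))) := by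
    funext c; simp [Function.comp, dist_eq_norm]
  rw [he]
  simpa using h2

-- deterministic lemma
lemma key_det {K : Type*} [MetricSpace K] [CompactSpace K] [Nonempty K]
    {L : ℝ≥0} {F : K → ℝ} {Fn : ℕ → K → ℝ}
    (hF : LipschitzWith L F) (hFn : ∀ n, LipschitzWith L (Fn n))
    {D : Set K} (hDd : Dense D)
    (hconv : ∀ c ∈ D, Tendsto (fun n => Fn n c) atTop (nhds (F c))) :
    Tendsto (fun n => ⨅ c, Fn n c) atTop (nhds (⨅ c, F c)) := by
  have bddF : BddBelow (Set.range F) := (isCompact_range hF.continuous).bddBelow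
  have bddFn : ∀ n, BddBelow (Set.range (Fn n)) :=
    fun n => (isCompact_range (hFn n).continuous).bddBelow
  rw [Metric.tendsto_atTop]
  intro ε hε
  set δ : ℝ := ε/4/((L:ℝ)+1) with hδdef
  have hδ : 0 < δ := by positivity
  have hLδ : (L:ℝ) * δ ≤ ε/4 := by
    have h1 : (0:ℝ) < (L:ℝ)+1 := by positivity
    have : (L:ℝ) * (ε/4/((L:ℝ)+1)) = (ε/4) * ((L:ℝ)/((L:ℝ)+1)) := by ring
    rw [hδdef, this]
    exact mul_le_of_le_one_right (by positivity) (div_le_one_of_le₀ (by linarith) h1.le)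
  have hcov : (Set.univ : Set K) ⊆ ⋃ c ∈ D, Metric.ball c δ := by
    intro p _
    obtain ⟨c, hcD, hc⟩ := Metric.mem_closure_iff.mp (hDd p) δ hδ
    simp only [Set.mem_iUnion]
    exact ⟨c, hcD, Metric.mem_ball.mpr hc⟩
  obtain ⟨T, hTD, hTfin, hTcov⟩ :=
    isCompact_univ.elim_finite_subcover_image (fun c _ => Metric.isOpen_ball) hcov
  have hev : ∀ᶠ n in atTop, ∀ c ∈ T, |Fn n c - F c| < ε/4 := by
    rw [Filter.eventually_all_finite hTfin]
    intro c hc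
    have h2 := (hconv c (hTD hc)) (Metric.ball_mem_nhds _ (by positivity : (0:ℝ) < ε/4))
    filter_upwards [h2] with n hn
    simpa [Real.dist_eq] using hn
  obtain ⟨N, hN⟩ := eventually_atTop.mp hev
  refine ⟨N, fun n hnN => ?_⟩
  have hn := hN n hnN
  have hunif : ∀ c : K, |Fn n c - F c| ≤ 3*(ε/4) := by
    intro c
    have hc := hTcov (Set.mem_univ c)
    simp only [Set.mem_iUnion] at hc
    obtain ⟨c', hc'T, hcball⟩ := hc
    have hd1 : dist c c' ≤ δ := (Metric.mem_ball.mp hcball).le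
    have b1 : |Fn n c - Fn n c'| ≤ ε/4 := by
      have := (hFn n).dist_le_mul c c'
      rw [Real.dist_eq] at this
      calc |Fn n c - Fn n c'| ≤ (L:ℝ) * dist c c' := this
        _ ≤ (L:ℝ) * δ := by
            exact mul_le_mul_of_nonneg_left hd1 L.coe_nonneg
        _ ≤ ε/4 := hLδ
    have b2 : |F c' - F c| ≤ ε/4 := by
      have := hF.dist_le_mul c' c
      rw [Real.dist_eq] at this
      calc |F c' - F c| ≤ (L:ℝ) * dist c' c := this
        _ ≤ (L:ℝ) * δ := by
            rw [dist_comm]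
            exact mul_le_mul_of_nonneg_left hd1 L.coe_nonneg
        _ ≤ ε/4 := hLδ
    have b3 : |Fn n c' - F c'| ≤ ε/4 := (hn c' hc'T).le
    have t1 := abs_sub_le (Fn n c) (Fn n c') (F c)
    have t2 := abs_sub_le (Fn n c') (F c') (F c)
    linarith
  have h1 : (⨅ c, Fn n c) ≤ (⨅ c, F c) + 3*(ε/4) := by
    rw [← sub_le_iff_le_add]
    apply le_ciInf
    intro c
    have := (abs_le.mp (hunif c)).2
    have h3 := ciInf_le (bddFn n) c
    linarith
  have h2 : (⨅ c, F c) ≤ (⨅ c, Fn n c) + 3*(ε/4) := by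
    rw [← sub_le_iff_le_add]
    apply le_ciInf
    intro c
    have := (abs_le.mp (hunif c)).1
    have h3 := ciInf_le bddF c
    linarith
  rw [Real.dist_eq, abs_sub_lt_iff]
  constructor <;> linarith

open ProbabilityTheory in
/-- Strong consistency: for i.i.d. samples `X₁, X₂, … ~ μ`, the empirical sphere depth
converges almost surely to the population sphere depth. -/
theorem stmt_14 (d : ℕ) (μ : Measure (EuclideanSpace ℝ (Fin d))) [IsProbabilityMeasure μ]
    (z : EuclideanSpace ℝ (Fin d)) (r s : ℝ) (hr : 0 < r) (hs : 0 < s)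
    {Ω : Type*} [MeasurableSpace Ω] (P : Measure Ω) [IsProbabilityMeasure P]
    (X : ℕ → Ω → EuclideanSpace ℝ (Fin d))
    (hXmeas : ∀ i, Measurable (X i)) (hXlaw : ∀ i, P.map (X i) = μ)
    (hXindep : iIndepFun X P) :
    ∀ᵐ ω ∂P, Filter.Tendsto (fun n : ℕ => SDemp d r s z n (fun i : Fin n => X i ω))
      Filter.atTop (nhds (SDs d r s z μ)) := by
  classical
  set L := Real.toNNReal (2 * Real.exp (r^2/s) / Real.sqrt s) with hLdef
  set g : EuclideanSpace ℝ (Fin d) → EuclideanSpace ℝ (Fin d) → ℝ :=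
    fun c x => sig s (r ^ 2 - ‖x - c‖ ^ 2) with hgdef
  have hgcont : ∀ c, Continuous (g c) := by
    intro c
    have hsig : Continuous (sig s) := by
      unfold sig
      exact continuous_const.div (by continuity) (fun t => by positivity)
    exact hsig.comp (by continuity)
  have hgb : ∀ c x, ‖g c x‖ ≤ 1 := fun c x => by
    rw [Real.norm_eq_abs, abs_of_nonneg sig_nonneg]; exact sig_le_one
  cases isEmpty_or_nonempty (Metric.sphere z r) with
  | inl he =>
    haveI := he
    refine Filter.Eventually.of_forall fun ω => ?_
    have h1 : SDs d r s z μ = 0 := Real.iInf_of_isEmpty _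
    have h2 : (fun n : ℕ => SDemp d r s z n (fun i : Fin n => X i ω)) = fun _ => 0 :=
      funext fun n => Real.iInf_of_isEmpty _
    rw [h1, h2]
    exact tendsto_const_nhds
  | inr hne =>
    obtain ⟨D, hDc, hDd⟩ := TopologicalSpace.exists_countable_dense (Metric.sphere z r)
    have slln : ∀ c : Metric.sphere z r, ∀ᵐ ω ∂P,
        Filter.Tendsto (fun n : ℕ => (n:ℝ)⁻¹ * ∑ i : Fin n, g c (X i ω)) Filter.atTop
          (nhds (∫ x, g c x ∂μ)) := by
      intro c
      set q : EuclideanSpace ℝ (Fin d) → ℝ := g (c : EuclideanSpace ℝ (Fin d)) with hq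
      have hqm : Measurable q := (hgcont c).measurable
      have hint : Integrable (fun ω => q (X 0 ω)) P := by
        apply Integrable.mono' (integrable_const 1) ((hqm.comp (hXmeas 0)).aestronglyMeasurable)
        exact Filter.Eventually.of_forall fun ω => hgb _ _
      have hident : ∀ i, ProbabilityTheory.IdentDistrib
          (fun ω => q (X i ω)) (fun ω => q (X 0 ω)) P P := by
        intro i
        have hX : ProbabilityTheory.IdentDistrib (X i) (X 0) P P :=
          ⟨(hXmeas i).aemeasurable, (hXmeas 0).aemeasurable, by rw [hXlaw i, hXlaw 0]⟩
        exact hX.comp hqm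
      have hindep : Pairwise (Function.onFun (ProbabilityTheory.IndepFun · · P) (fun i ω => q (X i ω))) :=
        fun i j hij => (hXindep.indepFun hij).comp hqm hqm
      have hmain := ProbabilityTheory.strong_law_ae_real _ hint hindep hident
      have heq : ∫ ω, q (X 0 ω) ∂P = ∫ x, q x ∂μ := by
        rw [← hXlaw 0, integral_map (hXmeas 0).aemeasurable hqm.aestronglyMeasurable]
      filter_upwards [hmain] with ω hω
      rw [heq] at hω
      have hfe : (fun n : ℕ => (n:ℝ)⁻¹ * ∑ i : Fin n, q (X i ω))
          = fun n : ℕ => (∑ i ∈ Finset.range n, q (X i ω)) / n := by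
        funext n
        rw [← Fin.sum_univ_eq_sum_range (fun i => q (X i ω)) n, div_eq_inv_mul]
      rw [hfe]
      exact hω
    have sllnD := (MeasureTheory.ae_ball_iff hDc).mpr (fun c (_ : c ∈ D) => slln c)
    filter_upwards [sllnD] with ω hω
    have hint : ∀ a, Integrable (g a) μ := fun a =>
      Integrable.mono' (integrable_const 1) ((hgcont a).aestronglyMeasurable)
        (Filter.Eventually.of_forall fun x => hgb a x)
    have hF : LipschitzWith L
        (fun c : Metric.sphere z r => ∫ x, g c x ∂μ) := by
      apply LipschitzWith.of_dist_le_mul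
      intro c c'
      rw [Real.dist_eq, ← integral_sub (hint c) (hint c')]
      calc |∫ x, (g c x - g c' x) ∂μ| ≤ ∫ x, |g c x - g c' x| ∂μ := by
            simpa [Real.norm_eq_abs] using
              norm_integral_le_integral_norm (μ := μ) (fun x => g c x - g c' x)
        _ ≤ ∫ _x, (L:ℝ) * dist c c' ∂μ := by
            apply integral_mono_of_nonneg (Filter.Eventually.of_forall fun x => abs_nonneg _)
              (integrable_const _)
            refine Filter.Eventually.of_forall fun x => ?_
            have h := (famLip (r := r) hs z x).dist_le_mul c c'
            rw [Real.dist_eq] at h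
            exact h
        _ = (L:ℝ) * dist c c' := by simp
    have hFn : ∀ n : ℕ, LipschitzWith L
        (fun c : Metric.sphere z r => (n:ℝ)⁻¹ * ∑ i : Fin n, g c (X i ω)) := by
      intro n
      apply LipschitzWith.of_dist_le_mul
      intro c c'
      rw [Real.dist_eq, ← mul_sub, ← Finset.sum_sub_distrib, abs_mul, abs_inv, Nat.abs_cast]
      calc (n:ℝ)⁻¹ * |∑ i : Fin n, (g c (X i ω) - g c' (X i ω))|
          ≤ (n:ℝ)⁻¹ * ∑ i : Fin n, |g c (X i ω) - g c' (X i ω)| :=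
            mul_le_mul_of_nonneg_left (Finset.abs_sum_le_sum_abs _ _) (by positivity)
        _ ≤ (n:ℝ)⁻¹ * ∑ _i : Fin n, (L:ℝ) * dist c c' := by
            apply mul_le_mul_of_nonneg_left _ (by positivity)
            apply Finset.sum_le_sum
            intro i _
            have h := (famLip (r := r) hs z (X i ω)).dist_le_mul c c'
            rw [Real.dist_eq] at h
            exact h
        _ = (n:ℝ)⁻¹ * ((n:ℝ) * ((L:ℝ) * dist c c')) := by
            rw [Finset.sum_const, Finset.card_univ, Fintype.card_fin, nsmul_eq_mul]
        _ ≤ (L:ℝ) * dist c c' := by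
            rcases Nat.eq_zero_or_pos n with h0 | h0
            · simp [h0]
              positivity
            · rw [← mul_assoc, inv_mul_cancel₀ (Nat.cast_ne_zero.mpr h0.ne'), one_mul]
    have hkey := key_det hF hFn hDd hω
    simpa only [SDemp, SDs] using hkey
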